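/- arXiv:2112.13552 — 3 statements merged into one kernel-verified Lean document; each statement's English description precedes it below -/
import Mathlib

section
/- Minimality of the finite part (Proposition 2.3.2(2)): In the situation of the decomposition result — (R,I) a henselian pair, q : Z ⟶ Spec R separated of finite type with finite closed fiber, and W ⊆ Z the unique clopen subset containing q⁻¹(V(I)) that is finite over Spec R — W is the smallest open subset of Z containing q⁻¹(V(I)): every open subset U of Z with q⁻¹(V(I)) ⊆ U satisfies W ⊆ U. -/
open AlgebraicGeometry CategoryTheory Limits

/-- **Minimality of the finite part.** Let `(R, I)` be a henselian pair and
`q : Z ⟶ Spec R` a separated morphism of finite type whose base change to `Spec (R ⧸ I)` is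
finite, and let `W` be the clopen subset of `Z` containing `q⁻¹(V(I))` and finite over
`Spec R`.  Then `W` is the smallest open subset of `Z` containing `q⁻¹(V(I))`. -/
theorem henselian_finite_part_minimal
    (R : Type u) [CommRing R] (I : Ideal R) [HenselianRing R I]
    (Z : Scheme.{u}) (q : Z ⟶ Spec (CommRingCat.of R))
    [IsSeparated q] [LocallyOfFiniteType q] [QuasiCompact q]
    [IsFinite (pullback.snd q (Spec.map (CommRingCat.ofHom (Ideal.Quotient.mk I))))]
    (W : Set Z) (hWopen : IsOpen W) (hWclosed : IsClosed W)
    (hWfib : q.base ⁻¹' (PrimeSpectrum.zeroLocus (I : Set R)) ⊆ W)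
    (hWfin : IsFinite (Scheme.Opens.ι (X := Z) ⟨W, hWopen⟩ ≫ q)) :
    ∀ U : Set Z, IsOpen U →
      q.base ⁻¹' (PrimeSpectrum.zeroLocus (I : Set R)) ⊆ U → W ⊆ U := by
  intro U hU hfib x hxW
  by_contra hxU
  set Wo : Z.Opens := ⟨W, hWopen⟩ with hWo
  set f := Scheme.Opens.ι (X := Z) Wo ≫ q with hf
  obtain ⟨hWaff, hfing⟩ : IsAffine Wo.toScheme ∧ (f.appTop).hom.Finite :=
    ⟨isAffine_of_isAffineHom f, f.finite_appTop⟩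
  -- f.base is a closed map
  have hclosed : IsClosedMap f.base := by
    have heq : f = Wo.toScheme.isoSpec.hom ≫ Spec.map f.appTop ≫
        (Spec (CommRingCat.of R)).isoSpec.inv := by
      rw [← Category.assoc, Scheme.isoSpec_hom_naturality, Category.assoc,
        Iso.hom_inv_id, Category.comp_id]
    rw [heq]
    simp only [Scheme.Hom.comp_base, TopCat.coe_comp]
    apply IsClosedMap.comp
    · apply IsClosedMap.comp
      · exact (TopCat.homeoOfIso
          (Scheme.forgetToTop.mapIso (Spec (CommRingCat.of R)).isoSpec.symm)).isClosedMap
      · exact PrimeSpectrum.isClosedMap_comap_of_isIntegral _ hfing.to_isIntegral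
    · exact (TopCat.homeoOfIso
        (Scheme.forgetToTop.mapIso Wo.toScheme.isoSpec)).isClosedMap
  -- the point x as a point of Wo
  obtain ⟨x', hx'⟩ : x ∈ Set.range Wo.ι.base := by rw [Scheme.Opens.range_ι]; exact hxW
  -- closed subset of W outside U
  set C : Set Wo.toScheme := Wo.ι.base ⁻¹' Uᶜ with hC
  have hCc : IsClosed C := (hU.isClosed_compl).preimage Wo.ι.continuous
  set T : Set (Spec (CommRingCat.of R)) := f.base '' C with hT
  have hTc : IsClosed T := hclosed C hCc
  have hTne : f.base x' ∈ T := ⟨x', by simp [hC, hx', hxU], rfl⟩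
  -- the vanishing ideal of T is proper
  have hle : PrimeSpectrum.vanishingIdeal T ≤ (f.base x').asIdeal := by
    exact (PrimeSpectrum.vanishingIdeal_anti_mono (Set.singleton_subset_iff.mpr hTne)).trans
      (PrimeSpectrum.vanishingIdeal_singleton _).le
  have hJ : PrimeSpectrum.vanishingIdeal T ≠ ⊤ := fun h => by
    exact (f.base x').isPrime.ne_top (top_le_iff.mp (h ▸ hle))
  obtain ⟨m, hm, hJm⟩ := Ideal.exists_le_maximal _ hJ
  set p : PrimeSpectrum R := ⟨m, hm.isPrime⟩ with hp
  have hpT : p ∈ T := by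
    have h1 : p ∈ PrimeSpectrum.zeroLocus
        ((PrimeSpectrum.vanishingIdeal T : Ideal (CommRingCat.of R)) : Set (CommRingCat.of R)) :=
      (PrimeSpectrum.mem_zeroLocus _ _).mpr hJm
    rwa [show PrimeSpectrum.zeroLocus ((PrimeSpectrum.vanishingIdeal T : Ideal (CommRingCat.of R)) :
      Set (CommRingCat.of R)) = closure T from PrimeSpectrum.zeroLocus_vanishingIdeal_eq_closure T,
      hTc.closure_eq] at h1
  have hIp : I ≤ p.asIdeal := le_trans HenselianRing.jac (sInf_le ⟨bot_le, hm⟩)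
  obtain ⟨y, hyC, hyp⟩ := hpT
  have hqy : q.base (Wo.ι.base y) = p := hyp
  have hyU : Wo.ι.base y ∈ U := hfib (by
    simp only [Set.mem_preimage, hqy]
    exact fun r hr => by have := hIp hr; rwa [← hqy] at this)
  exact hyC hyU
end

section
/- Factorization through the finite part (Proposition 2.3.2(3)): In the situation of the decomposition result — (R,I) a henselian pair, q : Z ⟶ Spec R separated of finite type with finite closed fiber, W ⊆ Z the unique clopen subset containing q⁻¹(V(I)) that is finite over Spec R — let T be a scheme with structure morphism p : T ⟶ Spec R such that the only open subset of T containing p⁻¹(V(I)) is T itself (i.e. (T, T̄) is a Zariski pair), and let u : T ⟶ Z be a morphism over Spec R. Then the set-theoretic image of u is contained in W; in particular u factors through the open subscheme W of Z. -/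
open AlgebraicGeometry CategoryTheory Limits

/-- **Factorization through the finite part.** Let `(R, I)` be a henselian pair,
`q : Z ⟶ Spec R` separated of finite type with finite closed fiber, and `W ⊆ Z` the clopen
subset containing `q⁻¹(V(I))` and finite over `Spec R`.  If `p : T ⟶ Spec R` is such that
`(T, T̄)` is a Zariski pair (the only open of `T` containing `p⁻¹(V(I))` is `T` itself), then
any `R`-morphism `u : T ⟶ Z` has set-theoretic image contained in `W`. -/
theorem henselian_finite_part_factorization
    (R : Type u) [CommRing R] (I : Ideal R) [HenselianRing R I]
    (Z : Scheme.{u}) (q : Z ⟶ Spec (CommRingCat.of R))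
    [IsSeparated q] [LocallyOfFiniteType q] [QuasiCompact q]
    [IsFinite (pullback.snd q (Spec.map (CommRingCat.ofHom (Ideal.Quotient.mk I))))]
    (W : Set Z) (hWopen : IsOpen W) (hWclosed : IsClosed W)
    (hWfib : q.base ⁻¹' (PrimeSpectrum.zeroLocus (I : Set R)) ⊆ W)
    (hWfin : IsFinite (Scheme.Opens.ι (X := Z) ⟨W, hWopen⟩ ≫ q))
    (T : Scheme.{u}) (p : T ⟶ Spec (CommRingCat.of R))
    (hzariski : ∀ U : Set T, IsOpen U →
      p.base ⁻¹' (PrimeSpectrum.zeroLocus (I : Set R)) ⊆ U → U = Set.univ)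
    (u : T ⟶ Z) (hu : u ≫ q = p) :
    Set.range u.base ⊆ W := by
  have h : (u.base ⁻¹' W : Set T) = Set.univ := by
    apply hzariski _ (hWopen.preimage u.continuous)
    intro x hx
    apply hWfib
    have h2 : q.base (u.base x) = p.base x := by
      rw [← Scheme.Hom.comp_apply, hu]
    show q.base (u.base x) ∈ (PrimeSpectrum.zeroLocus (I : Set R) : Set (Spec (CommRingCat.of R)))
    rw [h2]
    exact hx
  rintro _ ⟨x, rfl⟩
  have := h ▸ Set.mem_univ x
  exact this
end

section
/- Functoriality of the finite part (Remark 2.3.3(2)): Let (R,I) be a henselian pair. Let q_Z : Z ⟶ Spec R and q_Y : Y ⟶ Spec R be separated morphisms of finite type whose closed fibers (base changes to Spec(R/I)) are finite, and let W_Z ⊆ Z and W_Y ⊆ Y be the corresponding unique clopen subsets containing the closed fibers and finite over Spec R. Then every morphism h : Z ⟶ Y over Spec R maps W_Z into W_Y: the image of W_Z under the underlying map of h is contained in W_Y. -/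
open AlgebraicGeometry CategoryTheory Limits

universe u

lemma aux_idem_zero {A : Type*} [CommRing A] {e : A} (he : IsIdempotentElem e)
    (h : e ∈ Ideal.jacobson (⊥ : Ideal A)) : e = 0 := by
  have hu : IsUnit (e * (-1) + 1) := Ideal.mem_jacobson_bot.mp h (-1)
  obtain ⟨v, hv⟩ := hu.exists_left_inv
  have : e * (e * (-1) + 1) = 0 := by rw [mul_add, mul_one, ← mul_assoc, he.eq]; ring
  calc e = (v * (e * (-1) + 1)) * e := by rw [hv, one_mul]
    _ = v * (e * (e * (-1) + 1)) := by ring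
    _ = 0 := by rw [this, mul_zero]

lemma aux_ring {R A : Type u} [CommRing R] [CommRing A] (I : Ideal R) [HenselianRing R I]
    (φ : R →+* A) (hφ : φ.Finite) (s : Set (PrimeSpectrum A)) (hs : IsClopen s)
    (hdisj : ∀ p ∈ s, p ∉ PrimeSpectrum.zeroLocus (φ '' I)) : s = ∅ := by
  obtain ⟨e, he, hse⟩ := PrimeSpectrum.exists_idempotent_basicOpen_eq_of_isClopen hs
  set J := Ideal.map φ I with hJ
  have hrad : e ∈ J.radical := by
    rw [Ideal.radical_eq_sInf]
    refine Submodule.mem_sInf.2 ?_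
    rintro p ⟨hp1, hp2⟩
    by_contra hep
    refine hdisj ⟨p, hp2⟩ ?_ ?_
    · rw [hse]; exact hep
    · rw [PrimeSpectrum.mem_zeroLocus, ← Ideal.span_le, ← Ideal.map]
      exact hp1
  have heJ : e ∈ J := by
    obtain ⟨n, hn⟩ := hrad
    rcases Nat.eq_zero_or_pos n with h0 | h0
    · subst h0; simp only [pow_zero] at hn
      exact (Ideal.eq_top_iff_one J).mpr hn ▸ Submodule.mem_top
    · obtain ⟨m, rfl⟩ := Nat.exists_eq_succ_of_ne_zero h0.ne'
      rwa [he.pow_succ_eq m] at hn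
  have hJjac : J ≤ Ideal.jacobson (⊥ : Ideal A) := by
    rw [Ideal.jacobson]
    refine le_sInf ?_
    rintro m ⟨-, hm⟩
    rw [hJ, Ideal.map_le_iff_le_comap]
    have hmax : (m.comap φ).IsMaximal := by
      algebraize [φ]
      exact Ideal.isMaximal_comap_of_isIntegral_of_isMaximal m
    exact le_trans HenselianRing.jac (sInf_le ⟨bot_le, hmax⟩)
  have he0 : e = 0 := aux_idem_zero he (hJjac heJ)
  rw [hse, he0]
  simp

/-- **Functoriality of the finite part.** Let `(R, I)` be a henselian pair, and let
`qZ : Z ⟶ Spec R`, `qY : Y ⟶ Spec R` be separated morphisms of finite type with finite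
closed fibers, with finite parts `WZ ⊆ Z` and `WY ⊆ Y` (the unique clopen subsets containing
the closed fibers and finite over `Spec R`).  Then any morphism `h : Z ⟶ Y` over `Spec R`
maps `WZ` into `WY`. -/
theorem henselian_finite_part_functorial
    (R : Type u) [CommRing R] (I : Ideal R) [HenselianRing R I]
    (Z : Scheme.{u}) (qZ : Z ⟶ Spec (CommRingCat.of R))
    [IsSeparated qZ] [LocallyOfFiniteType qZ] [QuasiCompact qZ]
    [IsFinite (pullback.snd qZ (Spec.map (CommRingCat.ofHom (Ideal.Quotient.mk I))))]
    (Y : Scheme.{u}) (qY : Y ⟶ Spec (CommRingCat.of R))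
    [IsSeparated qY] [LocallyOfFiniteType qY] [QuasiCompact qY]
    [IsFinite (pullback.snd qY (Spec.map (CommRingCat.ofHom (Ideal.Quotient.mk I))))]
    (WZ : Set Z) (hWZopen : IsOpen WZ) (hWZclosed : IsClosed WZ)
    (hWZfib : qZ.base ⁻¹' (PrimeSpectrum.zeroLocus (I : Set R)) ⊆ WZ)
    (hWZfin : IsFinite (Scheme.Opens.ι (X := Z) ⟨WZ, hWZopen⟩ ≫ qZ))
    (WY : Set Y) (hWYopen : IsOpen WY) (hWYclosed : IsClosed WY)
    (hWYfib : qY.base ⁻¹' (PrimeSpectrum.zeroLocus (I : Set R)) ⊆ WY)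
    (hWYfin : IsFinite (Scheme.Opens.ι (X := Y) ⟨WY, hWYopen⟩ ≫ qY))
    (h : Z ⟶ Y) (hh : h ≫ qY = qZ) :
    h.base '' WZ ⊆ WY := by
  rintro _ ⟨z, hz, rfl⟩
  by_contra hyW
  set U : Z.Opens := ⟨WZ, hWZopen⟩ with hU
  set f : U.toScheme ⟶ Spec (CommRingCat.of R) := Scheme.Opens.ι U ≫ qZ with hf
  haveI hfinf : IsFinite f := hWZfin
  haveI : IsAffine U.toScheme := isAffine_of_isAffineHom f
  have hfin : RingHom.Finite (f.appTop.hom) :=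
    Scheme.Hom.finite_appTop f
  -- the ring map R ⟶ Γ(U)
  set φ : R →+* Γ(U.toScheme, ⊤) :=
    (f.appTop.hom : Γ(Spec (CommRingCat.of R), ⊤) →+* Γ(U.toScheme, ⊤)).comp
      ((Scheme.ΓSpecIso (CommRingCat.of R)).inv : CommRingCat.of R ⟶ _).hom with hφ
  have hφfin : φ.Finite := by
    refine RingHom.Finite.comp hfin (RingHom.Finite.of_surjective _ ?_)
    exact (ConcreteCategory.bijective_of_isIso
      ((Scheme.ΓSpecIso (CommRingCat.of R)).inv)).2
  -- commutation : Spec.map φ ∘ toSpecΓ = f on points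
  have hcomm : U.toScheme.toSpecΓ ≫ Spec.map (CommRingCat.ofHom φ) = f := by
    have h1 : f ≫ (Spec (CommRingCat.of R)).toSpecΓ = U.toScheme.toSpecΓ ≫ Spec.map (f.appTop) :=
      Scheme.toSpecΓ_naturality f
    have h2 : Spec.map ((Scheme.ΓSpecIso (CommRingCat.of R)).hom) =
        (Spec (CommRingCat.of R)).toSpecΓ := SpecMap_ΓSpecIso_hom (CommRingCat.of R)
    have : CommRingCat.ofHom φ = (Scheme.ΓSpecIso (CommRingCat.of R)).inv ≫ f.appTop := rfl
    change U.toScheme.toSpecΓ ≫ Spec.map ((Scheme.ΓSpecIso (CommRingCat.of R)).inv ≫ f.appTop) = f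
    rw [Spec.map_comp, ← Category.assoc, ← h1, ← h2, Category.assoc,
      ← Spec.map_comp, Iso.inv_hom_id, Spec.map_id, Category.comp_id]
  -- the clopen set in U
  set T : Set U.toScheme := (Scheme.Opens.ι U).base ⁻¹' (h.base ⁻¹' WYᶜ) with hT
  have hTclopen : IsClopen T := by
    refine IsClopen.preimage ?_ (Scheme.Opens.ι U).base.hom.continuous
    exact IsClopen.preimage ⟨hWYopen.isClosed_compl, hWYclosed.isOpen_compl⟩ h.base.hom.continuous
  -- its image in Spec Γ(U)
  set eH : U.toScheme ≃ₜ Spec Γ(U.toScheme, ⊤) := Scheme.homeoOfIso U.toScheme.isoSpec with heH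
  set S : Set (PrimeSpectrum Γ(U.toScheme, ⊤)) := eH '' T with hS
  have hScl : IsClopen S := ⟨eH.isClosed_image.2 hTclopen.1, eH.isOpen_image.2 hTclopen.2⟩
  have hSd : ∀ p ∈ S, p ∉ PrimeSpectrum.zeroLocus (φ '' I) := by
    rintro _ ⟨u, hu, rfl⟩ hp
    -- translate membership in zeroLocus
    have hbase : (Spec.map (CommRingCat.ofHom φ)).base (eH u) = f.base u := by
      have := congrArg (fun g : (U.toScheme ⟶ Spec (CommRingCat.of R)) => g.base u) hcomm
      simp [heH, Scheme.homeoOfIso_apply, Scheme.isoSpec_hom] at this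
      exact this
    have hcm : (Spec.map (CommRingCat.ofHom φ)).base (eH u) ∈
        PrimeSpectrum.zeroLocus (I : Set R) := by
      have : (Spec.map (CommRingCat.ofHom φ)).base (eH u) = PrimeSpectrum.comap φ (eH u) := rfl
      rw [this]
      change eH u ∈ PrimeSpectrum.comap φ ⁻¹' PrimeSpectrum.zeroLocus (I : Set R)
      rw [ PrimeSpectrum.preimage_comap_zeroLocus]
      exact hp
    rw [hbase] at hcm
    -- f.base u = qZ (ι u) lies in V(I), so h (ι u) ∈ WY
    have hq : qZ.base ((Scheme.Opens.ι U).base u) ∈ PrimeSpectrum.zeroLocus (I : Set R) := by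
      have : f.base u = qZ.base ((Scheme.Opens.ι U).base u) := by
        rw [hf]; rfl
      rwa [this] at hcm
    have hqY : qY.base (h.base ((Scheme.Opens.ι U).base u)) ∈
        PrimeSpectrum.zeroLocus (I : Set R) := by
      have : qY.base (h.base ((Scheme.Opens.ι U).base u)) =
          qZ.base ((Scheme.Opens.ι U).base u) := by
        rw [← hh]; rfl
      rwa [this]
    exact hu (hWYfib hqY)
  have hSempty : S = ∅ := aux_ring I φ hφfin S hScl hSd
  -- but z gives a point of S
  have hzT : (⟨z, hz⟩ : U.toScheme) ∈ T := by
    simp only [hT, Set.mem_preimage, Set.mem_compl_iff]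
    exact hyW
  have : eH ⟨z, hz⟩ ∈ S := ⟨_, hzT, rfl⟩
  rw [hSempty] at this
  exact this
end
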